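/- The problem of finding a maximum likelihood conjunctive discriminant is NP-hard: the minimum-weight monotone SAT problem reduces in polynomial time to it. Specifically, given a monotone CNF formula φ = C_1 ∧ ... ∧ C_n over variables x_1,...,x_m and ε ∈ (0, 1/2), construct the trace-set discrimination instance P_φ with one predicate p_i per variable; one trace per clause C_j whose valuation makes p_i true iff x_i does not occur in C_j, with label distribution (d(ℓ_1), d(ℓ_2)) = (0, 1); and one trace per variable x_i whose valuation makes exactly p_i false, with label distribution (1−ε, ε). Then φ has a satisfying assignment setting exactly k variables to true if and only if P_φ has a conjunctive discriminant of likelihood ε^k · (1−ε)^(m−k). -/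

import Mathlib

private lemma strict_dec (ε : ℝ) (hε0 : 0 < ε) (h1 : ε < 1 - ε) {m x y : ℕ}
    (hxy : x < y) (hy : y ≤ m) :
    ε ^ y * (1 - ε) ^ (m - y) < ε ^ x * (1 - ε) ^ (m - x) := by
  have hpos : (0:ℝ) < 1 - ε := lt_trans hε0 h1
  have hmx : m - x = (y - x) + (m - y) := by omega
  have hyx : ε ^ y = ε ^ x * ε ^ (y - x) := by rw [← pow_add]; congr 1; omega
  rw [hmx, pow_add, hyx]
  have hlt : ε ^ (y - x) < (1 - ε) ^ (y - x) :=
    pow_lt_pow_left₀ h1 hε0.le (by omega)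
  calc ε ^ x * ε ^ (y - x) * (1 - ε) ^ (m - y)
      < ε ^ x * (1 - ε) ^ (y - x) * (1 - ε) ^ (m - y) := by
        exact mul_lt_mul_of_pos_right
          (mul_lt_mul_of_pos_left hlt (pow_pos hε0 x)) (pow_pos hpos _)
    _ = ε ^ x * ((1 - ε) ^ (y - x) * (1 - ε) ^ (m - y)) := by ring

private lemma card_eq_aux (ε : ℝ) (hε0 : 0 < ε) (h1 : ε < 1 - ε) {m a k : ℕ}
    (ha : a ≤ m) (h : ε ^ a * (1 - ε) ^ (m - a) = ε ^ k * (1 - ε) ^ (m - k)) :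
    a = k := by
  by_contra hne
  rcases lt_or_gt_of_ne hne with hlt | hgt
  · by_cases hk : k ≤ m
    · exact absurd h.symm (ne_of_lt (strict_dec ε hε0 h1 hlt hk))
    · have hk' : m - k = 0 := by omega
      rw [hk', pow_zero, mul_one] at h
      have h2 : ε ^ k < ε ^ m :=
        pow_lt_pow_right_of_lt_one₀ hε0 (by linarith) (by omega)
      have h3 : ε ^ m ≤ ε ^ a * (1 - ε) ^ (m - a) := by
        have he : ε ^ m = ε ^ a * ε ^ (m - a) := by rw [← pow_add]; congr 1; omega
        rw [he]
        exact mul_le_mul_of_nonneg_left (pow_le_pow_left₀ hε0.le h1.le _)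
          (pow_pos hε0 a).le
      linarith
  · exact absurd h (ne_of_lt (strict_dec ε hε0 h1 hgt ha))

/-- NP-hardness reduction from minimum-weight monotone SAT: the monotone CNF φ with
clauses C_1,...,C_n has a satisfying assignment setting exactly k variables to true
iff the constructed trace-set discrimination instance has a conjunctive discriminant
of likelihood ε^k · (1-ε)^(m-k). -/
theorem stmt_8 (n m k : ℕ) (C : Fin n → Finset (Fin m)) (ε : ℝ)
    (hε0 : 0 < ε) (hε1 : ε < 1 / 2)
    (lik : Finset (Fin m) → ℝ)
    (hlik : ∀ A, lik A =
      (∏ j : Fin n, if ∀ i ∈ A, i ∉ C j then (0 : ℝ) else 1) *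
        (∏ i : Fin m, if i ∉ A then 1 - ε else ε)) :
    (∃ A : Finset (Fin m), A.card = k ∧ ∀ j, ∃ i ∈ C j, i ∈ A) ↔
      (∃ A : Finset (Fin m), lik A = ε ^ k * (1 - ε) ^ (m - k)) := by
  have h1 : ε < 1 - ε := by linarith
  have hpos : (0:ℝ) < 1 - ε := lt_trans hε0 h1
  have hprod : ∀ A : Finset (Fin m),
      (∏ i : Fin m, if i ∉ A then 1 - ε else ε)
        = ε ^ A.card * (1 - ε) ^ (m - A.card) := by
    intro A
    rw [Finset.prod_ite]
    simp only [Finset.prod_const]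
    have hfilter : (Finset.univ.filter (fun i => ¬ (i ∉ A))).card = A.card := by
      have : (Finset.univ.filter (fun i => ¬ (i ∉ A))) = A := by
        ext i; simp
      rw [this]
    have hcard2 : (Finset.univ.filter (fun i => i ∉ A)).card = m - A.card := by
      have := Finset.card_filter_add_card_filter_not
        (s := (Finset.univ : Finset (Fin m))) (p := fun i => i ∉ A)
      simp only [Finset.card_univ, Fintype.card_fin] at this
      omega
    rw [hcard2, hfilter, mul_comm]
  have hA_le : ∀ A : Finset (Fin m), A.card ≤ m := fun A => by
    simpa using Finset.card_le_univ A
  constructor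
  · rintro ⟨A, hcard, hsat⟩
    refine ⟨A, ?_⟩
    rw [hlik A, hprod A, hcard]
    have hone : (∏ j : Fin n, if ∀ i ∈ A, i ∉ C j then (0 : ℝ) else 1) = 1 := by
      apply Finset.prod_eq_one
      intro j _
      obtain ⟨i, hi, hiA⟩ := hsat j
      rw [if_neg]
      push_neg
      exact ⟨i, hiA, hi⟩
    rw [hone, one_mul]
  · rintro ⟨A, hA⟩
    rw [hlik A, hprod A] at hA
    have hrpos : (0:ℝ) < ε ^ k * (1 - ε) ^ (m - k) :=
      mul_pos (pow_pos hε0 _) (pow_pos hpos _)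
    have hsat : ∀ j, ∃ i ∈ C j, i ∈ A := by
      intro j
      by_contra hcon
      push_neg at hcon
      have hzero : (∏ j : Fin n, if ∀ i ∈ A, i ∉ C j then (0 : ℝ) else 1) = 0 := by
        apply Finset.prod_eq_zero (Finset.mem_univ j)
        rw [if_pos]
        intro i hiA hiC
        exact hcon i hiC hiA
      rw [hzero, zero_mul] at hA
      linarith
    have hone : (∏ j : Fin n, if ∀ i ∈ A, i ∉ C j then (0 : ℝ) else 1) = 1 := by
      apply Finset.prod_eq_one
      intro j _
      obtain ⟨i, hi, hiA⟩ := hsat j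
      rw [if_neg]
      push_neg
      exact ⟨i, hiA, hi⟩
    rw [hone, one_mul] at hA
    exact ⟨A, card_eq_aux ε hε0 h1 (hA_le A) hA, hsat⟩
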